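/- arXiv:2303.09401 — 3 statements merged into one kernel-verified Lean document; each statement's English description precedes it below -/
import Mathlib

section
/- Let p(x) = Σ_{n∈I₁} αₙ N(x; μₙ, Pₙ) and q(x) = Σ_{m∈I₂} βₘ N(x; mₘ, Sₘ) be two finite Gaussian mixtures on ℝ^d with real weights αₙ, βₘ, mean vectors μₙ, mₘ ∈ ℝ^d, and symmetric positive-definite covariance matrices Pₙ, Sₘ. Then the integrated squared difference satisfies ISD(p‖q) = Σ_{n,n'∈I₁} αₙ α_{n'} N(μₙ; μ_{n'}, Pₙ + P_{n'}) + Σ_{m,m'∈I₂} βₘ β_{m'} N(mₘ; m_{m'}, Sₘ + S_{m'}) − 2 Σ_{n∈I₁, m∈I₂} αₙ βₘ N(μₙ; mₘ, Pₙ + Sₘ). -/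
open MeasureTheory Real Matrix Finset

/-- The multivariate Gaussian density
`N(x; μ, Σ) = ((2π)^d det Σ)^{-1/2} exp(-(1/2)(x-μ)ᵀ Σ⁻¹ (x-μ))` on `ℝ^d`. -/
noncomputable def gaussPDF (d : ℕ) (μ : Fin d → ℝ) (S : Matrix (Fin d) (Fin d) ℝ)
    (x : Fin d → ℝ) : ℝ :=
  (Real.sqrt ((2 * Real.pi) ^ d * S.det))⁻¹ *
    Real.exp (-(1 / 2) * ((x - μ) ⬝ᵥ (S⁻¹ *ᵥ (x - μ))))

variable {d : ℕ}

open scoped MatrixOrder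

lemma sqrt_pow'' (a : ℝ) (ha : 0 ≤ a) (n : ℕ) : Real.sqrt a ^ n = Real.sqrt (a ^ n) := by
  symm
  rw [Real.sqrt_eq_iff_eq_sq (by positivity) (by positivity)]
  rw [← pow_mul, mul_comm, pow_mul, Real.sq_sqrt ha]

lemma dot_eq_prod (y : Fin d → ℝ) : Real.exp (-(1/2) * (y ⬝ᵥ y)) = ∏ i, Real.exp (-(1/2) * (y i)^2) := by
  rw [← Real.exp_sum]
  congr 1
  simp [dotProduct, Finset.mul_sum, sq]

lemma std_gauss_int : ∫ y : Fin d → ℝ, Real.exp (-(1/2) * (y ⬝ᵥ y)) = Real.sqrt ((2*Real.pi)^d) := by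
  simp_rw [dot_eq_prod]
  rw [MeasureTheory.volume_pi, MeasureTheory.integral_fintype_prod_eq_pow (ι := Fin d) (fun t : ℝ => Real.exp (-(1/2) * t^2))]
  rw [show ∫ t : ℝ, Real.exp (-(1/2) * t^2) = Real.sqrt (Real.pi / (1/2)) from integral_gaussian _]
  rw [Fintype.card_fin, sqrt_pow'' _ (by positivity), show Real.pi/(1/2) = 2*Real.pi by ring]

lemma std_gauss_integrable : Integrable (fun y : Fin d → ℝ => Real.exp (-(1/2) * (y ⬝ᵥ y))) := by
  simp_rw [dot_eq_prod]
  exact Integrable.fintype_prod (f := fun (_ : Fin d) (t : ℝ) => Real.exp (-(1/2) * t^2))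
    (fun i => integrable_exp_neg_mul_sq (by norm_num))

-- change of variables
lemma integral_comp_mulVec_add (M : Matrix (Fin d) (Fin d) ℝ) (hM : M.det ≠ 0) (c : Fin d → ℝ)
    (f : (Fin d → ℝ) → ℝ) (hf : AEStronglyMeasurable f (volume : Measure (Fin d → ℝ))) :
    ∫ y : Fin d → ℝ, f (M *ᵥ y + c) = |M.det|⁻¹ * ∫ x, f x := by
  have h1 : ∫ x : Fin d → ℝ, f (x + c) = ∫ x, f x := integral_add_right_eq_self f c
  set g : (Fin d → ℝ) → ℝ := fun x => f (x + c) with hg_def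
  have hg : AEStronglyMeasurable g (volume : Measure (Fin d → ℝ)) :=
    hf.comp_measurePreserving (measurePreserving_add_right volume c)
  have hdet : LinearMap.det (Matrix.toLin' M) ≠ 0 := by rwa [LinearMap.det_toLin']
  have hmap : Measure.map (Matrix.toLin' M) volume
      = ENNReal.ofReal |M.det|⁻¹ • volume := by
    rw [Real.map_linearMap_volume_pi_eq_smul_volume_pi hdet, LinearMap.det_toLin', abs_inv]
  have hmeas : Measurable (Matrix.toLin' M) :=
    (Matrix.toLin' M).continuous_of_finiteDimensional.measurable
  have key := MeasureTheory.integral_map (μ := volume) hmeas.aemeasurable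
    (f := g) (by rw [hmap]; exact hg.smul_measure _)
  rw [hmap, MeasureTheory.integral_smul_measure] at key
  have h2 : ∀ y, f (M *ᵥ y + c) = g ((Matrix.toLin' M) y) := by
    intro y; simp [hg_def, Matrix.toLin'_apply]
  simp_rw [h2]
  rw [← key, hg_def]
  simp only [h1]
  rw [ENNReal.toReal_ofReal (by positivity)]
  simp
  exact Or.inl (integral_add_right_eq_self f c)

lemma mulVec_dot_symm (M : Matrix (Fin d) (Fin d) ℝ) (hM : Mᵀ = M) (v w : Fin d → ℝ) :
    (M *ᵥ v) ⬝ᵥ w = v ⬝ᵥ (M *ᵥ w) := by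
  rw [Matrix.dotProduct_mulVec, ← Matrix.vecMul_transpose, hM]

lemma integrable_comp_mulVec_add (M : Matrix (Fin d) (Fin d) ℝ) (hM : M.det ≠ 0) (c : Fin d → ℝ)
    (f : (Fin d → ℝ) → ℝ) (hf : Integrable f (volume : Measure (Fin d → ℝ))) :
    Integrable (fun y : Fin d → ℝ => f (M *ᵥ y + c)) := by
  set g : (Fin d → ℝ) → ℝ := fun x => f (x + c) with hg_def
  have hg : Integrable g (volume : Measure (Fin d → ℝ)) :=
    (measurePreserving_add_right volume c).integrable_comp_emb
      (measurableEmbedding_addRight c) |>.mpr hf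
  have hdet : LinearMap.det (Matrix.toLin' M) ≠ 0 := by rwa [LinearMap.det_toLin']
  have hmap : Measure.map (Matrix.toLin' M) volume
      = ENNReal.ofReal |M.det|⁻¹ • volume := by
    rw [Real.map_linearMap_volume_pi_eq_smul_volume_pi hdet, LinearMap.det_toLin', abs_inv]
  have hmeas : Measurable (Matrix.toLin' M) :=
    (Matrix.toLin' M).continuous_of_finiteDimensional.measurable
  have key : Integrable g (Measure.map (Matrix.toLin' M) volume) := by
    rw [hmap]
    apply hg.smul_measure
    simp [ENNReal.ofReal_ne_top]
  have := (integrable_map_measure (by rw [hmap]; exact hg.aestronglyMeasurable.smul_measure _)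
    hmeas.aemeasurable).mp key
  have h2 : ∀ y, f (M *ᵥ y + c) = (g ∘ (Matrix.toLin' M)) y := by
    intro y; simp [hg_def, Matrix.toLin'_apply]
  simpa [h2, Function.comp_def, Matrix.toLin'_apply] using this

section quad
variable {A : Matrix (Fin d) (Fin d) ℝ}

lemma posdef_symm (hA : A.PosDef) : Aᵀ = A :=
  (Matrix.conjTranspose_eq_transpose_of_trivial A).symm.trans hA.isHermitian

lemma posdef_inv_symm (hA : A.PosDef) : A⁻¹ᵀ = A⁻¹ := by
  rw [Matrix.transpose_nonsing_inv, posdef_symm hA]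

lemma sqrtA_mul_self (hA : A.PosDef) : (CFC.sqrt A) * (CFC.sqrt A) = A := by
  exact CFC.sqrt_mul_sqrt_self A hA.posSemidef.nonneg

lemma sqrtA_symm (hA : A.PosDef) : ((CFC.sqrt A))ᵀ = (CFC.sqrt A) :=
  (Matrix.conjTranspose_eq_transpose_of_trivial _).symm.trans
    (Matrix.nonneg_iff_posSemidef.mp (CFC.sqrt_nonneg A)).isHermitian

lemma sqrtA_det_sq (hA : A.PosDef) : (CFC.sqrt A).det * (CFC.sqrt A).det = A.det := by
  rw [← Matrix.det_mul, sqrtA_mul_self hA]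

lemma sqrtA_det_ne (hA : A.PosDef) : (CFC.sqrt A).det ≠ 0 := by
  intro h
  have := sqrtA_det_sq hA
  rw [h, mul_zero] at this
  exact hA.det_pos.ne' this.symm

lemma sqrtA_inv_symm (hA : A.PosDef) : ((CFC.sqrt A)⁻¹)ᵀ = (CFC.sqrt A)⁻¹ := by
  rw [Matrix.transpose_nonsing_inv, sqrtA_symm hA]

lemma abs_det_sqrtA (hA : A.PosDef) : |(CFC.sqrt A).det| = Real.sqrt A.det := by
  rw [← sqrtA_det_sq hA, Real.sqrt_mul_self_eq_abs]

lemma quad_substitution (hA : A.PosDef) (b : Fin d → ℝ) (y : Fin d → ℝ) :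
    -(1/2) * (((CFC.sqrt A)⁻¹ *ᵥ y + A⁻¹ *ᵥ b) ⬝ᵥ
        (A *ᵥ ((CFC.sqrt A)⁻¹ *ᵥ y + A⁻¹ *ᵥ b)))
      + b ⬝ᵥ ((CFC.sqrt A)⁻¹ *ᵥ y + A⁻¹ *ᵥ b)
    = -(1/2) * (y ⬝ᵥ y) + (1/2) * (b ⬝ᵥ (A⁻¹ *ᵥ b)) := by
  set B := (CFC.sqrt A) with hB
  set u := B⁻¹ *ᵥ y with hu
  set c := A⁻¹ *ᵥ b with hc
  have hAdet : A.det ≠ 0 := hA.det_pos.ne'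
  have hAc : A *ᵥ c = b := by
    rw [hc, Matrix.mulVec_mulVec, Matrix.mul_nonsing_inv _ (isUnit_iff_ne_zero.mpr hAdet), Matrix.one_mulVec]
  have hAu : A *ᵥ u = B *ᵥ y := by
    rw [hu, Matrix.mulVec_mulVec, ← sqrtA_mul_self hA, Matrix.mul_assoc, ← hB,
      Matrix.mul_nonsing_inv _ (isUnit_iff_ne_zero.mpr (sqrtA_det_ne hA)), Matrix.mul_one]
  have h_yy : u ⬝ᵥ (B *ᵥ y) = y ⬝ᵥ y := by
    rw [hu, mulVec_dot_symm _ (sqrtA_inv_symm hA), Matrix.mulVec_mulVec,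
      Matrix.nonsing_inv_mul _ (isUnit_iff_ne_zero.mpr (sqrtA_det_ne hA)), Matrix.one_mulVec]
  have h_cu : c ⬝ᵥ (A *ᵥ u) = b ⬝ᵥ u := by
    rw [hc, mulVec_dot_symm _ (posdef_inv_symm hA), Matrix.mulVec_mulVec,
      Matrix.nonsing_inv_mul _ (isUnit_iff_ne_zero.mpr hAdet), Matrix.one_mulVec]
  rw [Matrix.mulVec_add, hAc, hAu]
  rw [add_dotProduct, dotProduct_add, dotProduct_add,
    dotProduct_add]
  rw [h_yy, ← hAu, h_cu, dotProduct_comm u b, dotProduct_comm c b]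
  ring

end quad

section quadint
variable {A : Matrix (Fin d) (Fin d) ℝ}

lemma exp_quad_continuous (A : Matrix (Fin d) (Fin d) ℝ) (b : Fin d → ℝ) :
    Continuous fun x : Fin d → ℝ => Real.exp (-(1/2) * (x ⬝ᵥ (A *ᵥ x)) + b ⬝ᵥ x) := by
  apply Real.continuous_exp.comp
  apply Continuous.add
  · apply Continuous.mul continuous_const
    unfold dotProduct Matrix.mulVec
    exact continuous_finset_sum _ fun i _ => ((continuous_apply i).mul
      (continuous_finset_sum _ fun j _ => (continuous_const.mul (continuous_apply j))))
  · unfold dotProduct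
    exact continuous_finset_sum _ fun i _ => continuous_const.mul (continuous_apply i)

lemma sqrtA_inv_det_ne (hA : A.PosDef) : ((CFC.sqrt A)⁻¹).det ≠ 0 := by
  rw [Matrix.det_nonsing_inv]
  simpa using sqrtA_det_ne hA

lemma quad_subst_exp (hA : A.PosDef) (b y : Fin d → ℝ) :
    Real.exp (-(1/2) * (((CFC.sqrt A)⁻¹ *ᵥ y + A⁻¹ *ᵥ b) ⬝ᵥ
        (A *ᵥ ((CFC.sqrt A)⁻¹ *ᵥ y + A⁻¹ *ᵥ b)))
      + b ⬝ᵥ ((CFC.sqrt A)⁻¹ *ᵥ y + A⁻¹ *ᵥ b))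
    = Real.exp (-(1/2) * (y ⬝ᵥ y)) * Real.exp ((1/2) * (b ⬝ᵥ (A⁻¹ *ᵥ b))) := by
  rw [quad_substitution hA b y, Real.exp_add]

lemma integrable_exp_quad (hA : A.PosDef) (b : Fin d → ℝ) :
    Integrable (fun x : Fin d → ℝ => Real.exp (-(1/2) * (x ⬝ᵥ (A *ᵥ x)) + b ⬝ᵥ x)) := by
  set B := (CFC.sqrt A) with hB
  set c := A⁻¹ *ᵥ b with hc
  set f : (Fin d → ℝ) → ℝ := fun x => Real.exp (-(1/2) * (x ⬝ᵥ (A *ᵥ x)) + b ⬝ᵥ x) with hf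
  set h : (Fin d → ℝ) → ℝ := fun y => f (B⁻¹ *ᵥ y + c) with hh
  have h_int : Integrable h := by
    have : h = fun y => Real.exp (-(1/2) * (y ⬝ᵥ y)) * Real.exp ((1/2) * (b ⬝ᵥ (A⁻¹ *ᵥ b))) := by
      funext y; exact quad_subst_exp hA b y
    rw [this]
    exact std_gauss_integrable.mul_const _
  have key := integrable_comp_mulVec_add B (sqrtA_det_ne hA) (-(B *ᵥ c)) h h_int
  have : ∀ x, h (B *ᵥ x + -(B *ᵥ c)) = f x := by
    intro x
    simp only [hh]
    congr 1
    have hBB : ∀ v : Fin d → ℝ, B⁻¹ *ᵥ (B *ᵥ v) = v := fun v => by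
      rw [Matrix.mulVec_mulVec,
        Matrix.nonsing_inv_mul _ (isUnit_iff_ne_zero.mpr (sqrtA_det_ne hA)), Matrix.one_mulVec]
    rw [Matrix.mulVec_add, Matrix.mulVec_neg, hBB, hBB]
    abel
  simpa [this] using key

lemma integral_exp_quad (hA : A.PosDef) (b : Fin d → ℝ) :
    ∫ x : Fin d → ℝ, Real.exp (-(1/2) * (x ⬝ᵥ (A *ᵥ x)) + b ⬝ᵥ x)
      = Real.sqrt ((2*Real.pi)^d / A.det) * Real.exp ((1/2) * (b ⬝ᵥ (A⁻¹ *ᵥ b))) := by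
  set B := (CFC.sqrt A) with hB
  set c := A⁻¹ *ᵥ b with hc
  set f : (Fin d → ℝ) → ℝ := fun x => Real.exp (-(1/2) * (x ⬝ᵥ (A *ᵥ x)) + b ⬝ᵥ x) with hf
  have key := integral_comp_mulVec_add B⁻¹ (sqrtA_inv_det_ne hA) c f
    (exp_quad_continuous A b).aestronglyMeasurable
  have hL : ∫ y : Fin d → ℝ, f (B⁻¹ *ᵥ y + c)
      = Real.sqrt ((2*Real.pi)^d) * Real.exp ((1/2) * (b ⬝ᵥ (A⁻¹ *ᵥ b))) := by
    have : ∀ y : Fin d → ℝ, f (B⁻¹ *ᵥ y + c)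
        = Real.exp (-(1/2) * (y ⬝ᵥ y)) * Real.exp ((1/2) * (b ⬝ᵥ (A⁻¹ *ᵥ b))) :=
      fun y => quad_subst_exp hA b y
    simp_rw [this]
    rw [integral_mul_const, std_gauss_int]
  rw [hL] at key
  have habs : |B⁻¹.det| = (Real.sqrt A.det)⁻¹ := by
    rw [Matrix.det_nonsing_inv, Ring.inverse_eq_inv, abs_inv, abs_det_sqrtA hA]
  rw [habs] at key
  have hsA : Real.sqrt A.det ≠ 0 := by
    simpa [Real.sqrt_ne_zero'] using hA.det_pos
  rw [inv_inv] at key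
  rw [Real.sqrt_div (by positivity) A.det, div_mul_eq_mul_div, eq_div_iff hsA]
  linarith [key]

lemma expand_quad (M : Matrix (Fin d) (Fin d) ℝ) (hM : Mᵀ = M) (μ x : Fin d → ℝ) :
    (x - μ) ⬝ᵥ (M *ᵥ (x - μ))
      = x ⬝ᵥ (M *ᵥ x) - 2 * (μ ⬝ᵥ (M *ᵥ x)) + μ ⬝ᵥ (M *ᵥ μ) := by
  have hcross : x ⬝ᵥ (M *ᵥ μ) = μ ⬝ᵥ (M *ᵥ x) := by
    rw [← mulVec_dot_symm M hM x μ, dotProduct_comm]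
  rw [sub_eq_add_neg, Matrix.mulVec_add, Matrix.mulVec_neg, add_dotProduct,
    neg_dotProduct, dotProduct_add, dotProduct_add,
    dotProduct_neg, dotProduct_neg, hcross]
  ring

section gprod
variable {P S : Matrix (Fin d) (Fin d) ℝ}

lemma gaussPDF_mul (hP : P.PosDef) (hS : S.PosDef) (μ₁ μ₂ x : Fin d → ℝ) :
    gaussPDF d μ₁ P x * gaussPDF d μ₂ S x
      = ((Real.sqrt ((2 * Real.pi) ^ d * P.det))⁻¹ * (Real.sqrt ((2 * Real.pi) ^ d * S.det))⁻¹
          * Real.exp (-(1/2) * (μ₁ ⬝ᵥ (P⁻¹ *ᵥ μ₁) + μ₂ ⬝ᵥ (S⁻¹ *ᵥ μ₂))))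
        * Real.exp (-(1/2) * (x ⬝ᵥ ((P⁻¹ + S⁻¹) *ᵥ x)) + (P⁻¹ *ᵥ μ₁ + S⁻¹ *ᵥ μ₂) ⬝ᵥ x) := by
  have e1 := expand_quad P⁻¹ (posdef_inv_symm hP) μ₁ x
  have e2 := expand_quad S⁻¹ (posdef_inv_symm hS) μ₂ x
  have e3 : (P⁻¹ *ᵥ μ₁ + S⁻¹ *ᵥ μ₂) ⬝ᵥ x = μ₁ ⬝ᵥ (P⁻¹ *ᵥ x) + μ₂ ⬝ᵥ (S⁻¹ *ᵥ x) := by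
    rw [add_dotProduct, mulVec_dot_symm P⁻¹ (posdef_inv_symm hP),
      mulVec_dot_symm S⁻¹ (posdef_inv_symm hS)]
  have e4 : x ⬝ᵥ ((P⁻¹ + S⁻¹) *ᵥ x) = x ⬝ᵥ (P⁻¹ *ᵥ x) + x ⬝ᵥ (S⁻¹ *ᵥ x) := by
    rw [Matrix.add_mulVec, dotProduct_add]
  unfold gaussPDF
  conv_rhs => rw [mul_assoc]
  rw [mul_mul_mul_comm, ← Real.exp_add, ← Real.exp_add]
  congr 1
  rw [e1, e2, e3, e4]
  ring

lemma PAS_eq (hP : P.PosDef) (hS : S.PosDef) : P * (P⁻¹ + S⁻¹) * S = S + P := by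
  rw [Matrix.mul_add, Matrix.mul_nonsing_inv _ (isUnit_iff_ne_zero.mpr hP.det_pos.ne'),
    Matrix.add_mul, Matrix.one_mul, Matrix.mul_assoc,
    Matrix.nonsing_inv_mul _ (isUnit_iff_ne_zero.mpr hS.det_pos.ne'), Matrix.mul_one]

lemma det_comb (hP : P.PosDef) (hS : S.PosDef) :
    P.det * (P⁻¹ + S⁻¹).det * S.det = (P + S).det := by
  rw [← Matrix.det_mul, ← Matrix.det_mul, PAS_eq hP hS, add_comm]

lemma Ainv_eq₁ (hP : P.PosDef) (hS : S.PosDef) :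
    (P⁻¹ + S⁻¹)⁻¹ = S * (P + S)⁻¹ * P := by
  apply Matrix.inv_eq_right_inv
  have h1 : (P⁻¹ + S⁻¹) * S = P⁻¹ * (S + P) := by
    rw [Matrix.add_mul, Matrix.nonsing_inv_mul _ (isUnit_iff_ne_zero.mpr hS.det_pos.ne'),
      Matrix.mul_add, Matrix.nonsing_inv_mul _ (isUnit_iff_ne_zero.mpr hP.det_pos.ne')]
  rw [← Matrix.mul_assoc, ← Matrix.mul_assoc, h1, Matrix.mul_assoc P⁻¹,
    show (S + P) * (P + S)⁻¹ = 1 from by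
      rw [add_comm, Matrix.mul_nonsing_inv _ (isUnit_iff_ne_zero.mpr (hP.add hS).det_pos.ne')],
    Matrix.mul_one, Matrix.nonsing_inv_mul _ (isUnit_iff_ne_zero.mpr hP.det_pos.ne')]

lemma Ainv_eq₂ (hP : P.PosDef) (hS : S.PosDef) :
    (P⁻¹ + S⁻¹)⁻¹ = P * (P + S)⁻¹ * S := by
  have := Ainv_eq₁ hS hP
  rw [add_comm S⁻¹, add_comm S P] at this
  exact this

lemma exponent_comb (hP : P.PosDef) (hS : S.PosDef) (μ₁ μ₂ : Fin d → ℝ) :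
    (1/2) * ((P⁻¹ *ᵥ μ₁ + S⁻¹ *ᵥ μ₂) ⬝ᵥ ((P⁻¹ + S⁻¹)⁻¹ *ᵥ (P⁻¹ *ᵥ μ₁ + S⁻¹ *ᵥ μ₂)))
        + -(1/2) * (μ₁ ⬝ᵥ (P⁻¹ *ᵥ μ₁) + μ₂ ⬝ᵥ (S⁻¹ *ᵥ μ₂))
      = -(1/2) * ((μ₁ - μ₂) ⬝ᵥ ((P + S)⁻¹ *ᵥ (μ₁ - μ₂))) := by
  set T := (P + S)⁻¹ with hT
  have hPdet := isUnit_iff_ne_zero.mpr hP.det_pos.ne'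
  have hSdet := isUnit_iff_ne_zero.mpr hS.det_pos.ne'
  have hTsymm : Tᵀ = T := posdef_inv_symm (hP.add hS)
  -- A⁻¹ applied to b
  have hApp : (P⁻¹ + S⁻¹)⁻¹ *ᵥ (P⁻¹ *ᵥ μ₁ + S⁻¹ *ᵥ μ₂)
      = (S * T) *ᵥ μ₁ + (P * T) *ᵥ μ₂ := by
    rw [Matrix.mulVec_add]
    congr 1
    · rw [Ainv_eq₁ hP hS, Matrix.mulVec_mulVec, Matrix.mul_assoc,
        Matrix.mul_assoc, Matrix.mul_nonsing_inv _ hPdet, Matrix.mul_one, hT]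
    · rw [Ainv_eq₂ hP hS, Matrix.mulVec_mulVec, Matrix.mul_assoc,
        Matrix.mul_assoc, Matrix.mul_nonsing_inv _ hSdet, Matrix.mul_one, hT]
  have hPST : P⁻¹ * (S * T) = P⁻¹ - T := by
    have : P⁻¹ * (S * T) = P⁻¹ * ((S + P) * T) - T := by
      rw [Matrix.add_mul, Matrix.mul_add, ← Matrix.mul_assoc P⁻¹ P T,
        Matrix.nonsing_inv_mul _ hPdet, Matrix.one_mul]
      abel
    rw [this, show (S + P) * T = 1 from by
      rw [hT, add_comm, Matrix.mul_nonsing_inv _ (isUnit_iff_ne_zero.mpr (hP.add hS).det_pos.ne')],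
      Matrix.mul_one]
  have hSPT : S⁻¹ * (P * T) = S⁻¹ - T := by
    have : S⁻¹ * (P * T) = S⁻¹ * ((P + S) * T) - T := by
      rw [Matrix.add_mul, Matrix.mul_add, ← Matrix.mul_assoc S⁻¹ S T,
        Matrix.nonsing_inv_mul _ hSdet, Matrix.one_mul]
      abel
    rw [this, show (P + S) * T = 1 from by
      rw [hT, Matrix.mul_nonsing_inv _ (isUnit_iff_ne_zero.mpr (hP.add hS).det_pos.ne')],
      Matrix.mul_one]
  have t11 : (P⁻¹ *ᵥ μ₁) ⬝ᵥ ((S * T) *ᵥ μ₁) = μ₁ ⬝ᵥ (P⁻¹ *ᵥ μ₁) - μ₁ ⬝ᵥ (T *ᵥ μ₁) := by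
    rw [mulVec_dot_symm P⁻¹ (posdef_inv_symm hP), Matrix.mulVec_mulVec, hPST,
      Matrix.sub_mulVec, dotProduct_sub]
  have t12 : (P⁻¹ *ᵥ μ₁) ⬝ᵥ ((P * T) *ᵥ μ₂) = μ₁ ⬝ᵥ (T *ᵥ μ₂) := by
    rw [mulVec_dot_symm P⁻¹ (posdef_inv_symm hP), Matrix.mulVec_mulVec,
      ← Matrix.mul_assoc, Matrix.nonsing_inv_mul _ hPdet, Matrix.one_mul]
  have t21 : (S⁻¹ *ᵥ μ₂) ⬝ᵥ ((S * T) *ᵥ μ₁) = μ₁ ⬝ᵥ (T *ᵥ μ₂) := by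
    rw [mulVec_dot_symm S⁻¹ (posdef_inv_symm hS), Matrix.mulVec_mulVec,
      ← Matrix.mul_assoc, Matrix.nonsing_inv_mul _ hSdet, Matrix.one_mul]
    rw [dotProduct_comm, mulVec_dot_symm T hTsymm]
  have t22 : (S⁻¹ *ᵥ μ₂) ⬝ᵥ ((P * T) *ᵥ μ₂) = μ₂ ⬝ᵥ (S⁻¹ *ᵥ μ₂) - μ₂ ⬝ᵥ (T *ᵥ μ₂) := by
    rw [mulVec_dot_symm S⁻¹ (posdef_inv_symm hS), Matrix.mulVec_mulVec,
      hSPT, Matrix.sub_mulVec, dotProduct_sub]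
  rw [hApp, add_dotProduct, dotProduct_add, dotProduct_add, t11, t12, t21, t22]
  rw [expand_quad T hTsymm μ₂ μ₁,
    show μ₂ ⬝ᵥ (T *ᵥ μ₁) = μ₁ ⬝ᵥ (T *ᵥ μ₂) from by
      rw [dotProduct_comm, mulVec_dot_symm T hTsymm]]
  ring

lemma norm_comb (hP : P.PosDef) (hS : S.PosDef) :
    (Real.sqrt ((2 * Real.pi) ^ d * P.det))⁻¹ * (Real.sqrt ((2 * Real.pi) ^ d * S.det))⁻¹
        * Real.sqrt ((2 * Real.pi) ^ d / (P⁻¹ + S⁻¹).det)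
      = (Real.sqrt ((2 * Real.pi) ^ d * (P + S).det))⁻¹ := by
  have hA : (P⁻¹ + S⁻¹).PosDef := hP.inv.add hS.inv
  have hp := hP.det_pos
  have hs := hS.det_pos
  have ha := hA.det_pos
  have ht := (hP.add hS).det_pos
  have hc : (0:ℝ) < (2 * Real.pi) ^ d := by positivity
  have key : Real.sqrt P.det * Real.sqrt S.det * Real.sqrt (P⁻¹ + S⁻¹).det
      = Real.sqrt (P + S).det := by
    rw [← Real.sqrt_mul hp.le, ← Real.sqrt_mul (by positivity)]
    congr 1
    rw [← det_comb hP hS]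
    ring
  rw [Real.sqrt_mul hc.le, Real.sqrt_mul hc.le, Real.sqrt_mul hc.le, Real.sqrt_div hc.le]
  have h1 : Real.sqrt ((2 * Real.pi) ^ d) ≠ 0 := by positivity
  have h2 : Real.sqrt P.det ≠ 0 := by positivity
  have h3 : Real.sqrt S.det ≠ 0 := by positivity
  have h4 : Real.sqrt (P⁻¹ + S⁻¹).det ≠ 0 := by positivity
  have h5 : Real.sqrt (P + S).det ≠ 0 := by positivity
  rw [← key]
  set a := Real.sqrt ((2 * Real.pi) ^ d) with ha
  set p := Real.sqrt P.det with hpd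
  set s := Real.sqrt S.det with hsd
  set q := Real.sqrt (P⁻¹ + S⁻¹).det with hqd
  field_simp

lemma integrable_gaussPDF_mul (hP : P.PosDef) (hS : S.PosDef) (μ₁ μ₂ : Fin d → ℝ) :
    Integrable (fun x : Fin d → ℝ => gaussPDF d μ₁ P x * gaussPDF d μ₂ S x) := by
  simp_rw [gaussPDF_mul hP hS]
  exact (integrable_exp_quad (hP.inv.add hS.inv) _).const_mul _

lemma integral_gaussPDF_mul (hP : P.PosDef) (hS : S.PosDef) (μ₁ μ₂ : Fin d → ℝ) :
    ∫ x : Fin d → ℝ, gaussPDF d μ₁ P x * gaussPDF d μ₂ S x = gaussPDF d μ₂ (P + S) μ₁ := by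
  simp_rw [gaussPDF_mul hP hS]
  rw [MeasureTheory.integral_const_mul, integral_exp_quad (hP.inv.add hS.inv)]
  unfold gaussPDF
  rw [mul_mul_mul_comm, ← Real.exp_add, norm_comb hP hS]
  congr 1
  rw [add_comm]
  exact congrArg Real.exp (exponent_comb hP hS μ₁ μ₂)

lemma integrable_term (hP : P.PosDef) (hS : S.PosDef) (a b : ℝ) (μ₁ μ₂ : Fin d → ℝ) :
    Integrable (fun x : Fin d → ℝ => (a * gaussPDF d μ₁ P x) * (b * gaussPDF d μ₂ S x)) := by
  have : (fun x : Fin d → ℝ => (a * gaussPDF d μ₁ P x) * (b * gaussPDF d μ₂ S x))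
      = fun x => (a * b) * (gaussPDF d μ₁ P x * gaussPDF d μ₂ S x) := funext fun x => by ring
  rw [this]
  exact (integrable_gaussPDF_mul hP hS _ _).const_mul _

lemma integral_term (hP : P.PosDef) (hS : S.PosDef) (a b : ℝ) (μ₁ μ₂ : Fin d → ℝ) :
    ∫ x : Fin d → ℝ, (a * gaussPDF d μ₁ P x) * (b * gaussPDF d μ₂ S x)
      = a * b * gaussPDF d μ₂ (P + S) μ₁ := by
  have : (fun x : Fin d → ℝ => (a * gaussPDF d μ₁ P x) * (b * gaussPDF d μ₂ S x))
      = fun x => (a * b) * (gaussPDF d μ₁ P x * gaussPDF d μ₂ S x) := funext fun x => by ring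
  rw [this, MeasureTheory.integral_const_mul, integral_gaussPDF_mul hP hS]

end gprod

lemma integral_double_sum {ι κ : Type*} [Fintype ι] [Fintype κ]
    (F : ι → κ → (Fin d → ℝ) → ℝ) (h : ∀ i j, Integrable (F i j)) :
    ∫ x : Fin d → ℝ, ∑ i, ∑ j, F i j x = ∑ i, ∑ j, ∫ x, F i j x := by
  rw [MeasureTheory.integral_finset_sum _
    (fun i _ => integrable_finset_sum _ fun j _ => h i j)]
  exact Finset.sum_congr rfl fun i _ => MeasureTheory.integral_finset_sum _ (fun j _ => h i j)


/-- The integrated squared difference between two finite Gaussian mixtures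
`p = Σₙ αₙ N(·; μₙ, Pₙ)` and `q = Σₘ βₘ N(·; mₘ, Sₘ)` is
`ISD(p‖q) = Σ_{n,n'} αₙα_{n'} N(μₙ; μ_{n'}, Pₙ+P_{n'})
 + Σ_{m,m'} βₘβ_{m'} N(mₘ; m_{m'}, Sₘ+S_{m'})
 - 2 Σ_{n,m} αₙβₘ N(μₙ; mₘ, Pₙ+Sₘ)`. -/
theorem isd_gaussian_mixtures (d : ℕ) (I₁ I₂ : Type*) [Fintype I₁] [Fintype I₂]
    (α : I₁ → ℝ) (β : I₂ → ℝ)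
    (μ : I₁ → Fin d → ℝ) (m : I₂ → Fin d → ℝ)
    (P : I₁ → Matrix (Fin d) (Fin d) ℝ) (S : I₂ → Matrix (Fin d) (Fin d) ℝ)
    (hP : ∀ n, (P n).PosDef) (hS : ∀ m', (S m').PosDef) :
    ∫ x : Fin d → ℝ,
        ((∑ n, α n * gaussPDF d (μ n) (P n) x)
          - ∑ m', β m' * gaussPDF d (m m') (S m') x) ^ 2
      = (∑ n, ∑ n', α n * α n' * gaussPDF d (μ n') (P n + P n') (μ n))
        + (∑ m', ∑ m'', β m' * β m'' * gaussPDF d (m m'') (S m' + S m'') (m m'))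
        - 2 * ∑ n, ∑ m', α n * β m' * gaussPDF d (m m') (P n + S m') (μ n) := by
  have hpt : ∀ x : Fin d → ℝ,
      ((∑ n, α n * gaussPDF d (μ n) (P n) x) - ∑ m', β m' * gaussPDF d (m m') (S m') x) ^ 2
      = ((∑ n, ∑ n', (α n * gaussPDF d (μ n) (P n) x) * (α n' * gaussPDF d (μ n') (P n') x))
        + (∑ m', ∑ m'', (β m' * gaussPDF d (m m') (S m') x) * (β m'' * gaussPDF d (m m'') (S m'') x)))
        - 2 * (∑ n, ∑ m', (α n * gaussPDF d (μ n) (P n) x) * (β m' * gaussPDF d (m m') (S m') x)) := by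
    intro x
    rw [sub_sq, sq, sq, Finset.sum_mul_sum, Finset.sum_mul_sum, mul_assoc,
      Finset.sum_mul_sum]
    ring
  simp_rw [hpt]
  have hff : ∀ (n n' : I₁), Integrable (fun x : Fin d → ℝ =>
      (α n * gaussPDF d (μ n) (P n) x) * (α n' * gaussPDF d (μ n') (P n') x)) :=
    fun n n' => integrable_term (hP n) (hP n') _ _ _ _
  have hgg : ∀ (m' m'' : I₂), Integrable (fun x : Fin d → ℝ =>
      (β m' * gaussPDF d (m m') (S m') x) * (β m'' * gaussPDF d (m m'') (S m'') x)) :=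
    fun m' m'' => integrable_term (hS m') (hS m'') _ _ _ _
  have hfg : ∀ (n : I₁) (m' : I₂), Integrable (fun x : Fin d → ℝ =>
      (α n * gaussPDF d (μ n) (P n) x) * (β m' * gaussPDF d (m m') (S m') x)) :=
    fun n m' => integrable_term (hP n) (hS m') _ _ _ _
  have hFF : Integrable (fun x : Fin d → ℝ => ∑ n, ∑ n',
      (α n * gaussPDF d (μ n) (P n) x) * (α n' * gaussPDF d (μ n') (P n') x)) :=
    integrable_finset_sum _ fun n _ => integrable_finset_sum _ fun n' _ => hff n n'
  have hGG : Integrable (fun x : Fin d → ℝ => ∑ m', ∑ m'',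
      (β m' * gaussPDF d (m m') (S m') x) * (β m'' * gaussPDF d (m m'') (S m'') x)) :=
    integrable_finset_sum _ fun a _ => integrable_finset_sum _ fun b _ => hgg a b
  have hFG : Integrable (fun x : Fin d → ℝ => ∑ n, ∑ m',
      (α n * gaussPDF d (μ n) (P n) x) * (β m' * gaussPDF d (m m') (S m') x)) :=
    integrable_finset_sum _ fun a _ => integrable_finset_sum _ fun b _ => hfg a b
  have hsum : Integrable (fun x : Fin d → ℝ =>
      (∑ n, ∑ n', (α n * gaussPDF d (μ n) (P n) x) * (α n' * gaussPDF d (μ n') (P n') x))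
      + ∑ m', ∑ m'', (β m' * gaussPDF d (m m') (S m') x) * (β m'' * gaussPDF d (m m'') (S m'') x)) :=
    hFF.add hGG
  rw [MeasureTheory.integral_sub hsum (hFG.const_mul 2),
    MeasureTheory.integral_add hFF hGG, MeasureTheory.integral_const_mul,
    integral_double_sum _ hff, integral_double_sum _ hgg, integral_double_sum _ hfg]
  congr 1
  · congr 1
    · exact Finset.sum_congr rfl fun n _ => Finset.sum_congr rfl fun n' _ =>
        integral_term (hP n) (hP n') _ _ _ _
    · exact Finset.sum_congr rfl fun a _ => Finset.sum_congr rfl fun b _ =>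
        integral_term (hS a) (hS b) _ _ _ _
  · congr 1
    exact Finset.sum_congr rfl fun a _ => Finset.sum_congr rfl fun b _ =>
      integral_term (hP a) (hS b) _ _ _ _
end quadint
end

section
/- (Lemma 1) Let p(x) = Σ_{n∈I₁} αₙ N(x; μₙ, Pₙ) and q(x) = Σ_{m∈I₂} βₘ N(x; mₘ, Sₘ) be two finite Gaussian mixtures on ℝ^d with symmetric positive-definite covariances. Fix n ∈ I₁ and hold all weights other than αₙ fixed. Then the value αₙ* = (2π)^{d/2} (det(2Pₙ))^{1/2} · [ Σ_{m∈I₂} βₘ N(μₙ; mₘ, Pₙ + Sₘ) − Σ_{n'∈I₁, n'≠n} α_{n'} N(μₙ; μ_{n'}, Pₙ + P_{n'}) ] is the unique global minimizer over αₙ ∈ ℝ of the map αₙ ↦ ISD(p‖q). -/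
open MeasureTheory Real Matrix Finset

/-- `J(αₙ) = ISD(p‖q)` regarded as a function of the single mixture weight `αₙ`
of the `n`-th component of `p`, all other weights held fixed. -/
noncomputable def isdWeightFun (d : ℕ) (I₁ I₂ : Type*)
    [Fintype I₁] [Fintype I₂] [DecidableEq I₁]
    (α : I₁ → ℝ) (β : I₂ → ℝ)
    (μ : I₁ → Fin d → ℝ) (m : I₂ → Fin d → ℝ)
    (P : I₁ → Matrix (Fin d) (Fin d) ℝ) (S : I₂ → Matrix (Fin d) (Fin d) ℝ)
    (n : I₁) (t : ℝ) : ℝ :=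
  ∫ x : Fin d → ℝ,
    ((∑ n', Function.update α n t n' * gaussPDF d (μ n') (P n') x)
      - ∑ m', β m' * gaussPDF d (m m') (S m') x) ^ 2

private lemma ISD.sqrt_pow_comm (a : ℝ) (ha : 0 ≤ a) (d : ℕ) :
    (Real.sqrt a)^d = Real.sqrt (a^d) := by
  rw [show a ^ d = ((Real.sqrt a)^d)^2 by rw [← pow_mul, mul_comm, pow_mul, Real.sq_sqrt ha],
    Real.sqrt_sq (by positivity)]

private lemma ISD.iso_prod (d : ℕ) : (fun x : Fin d → ℝ => Real.exp (-(1/2) * (x ⬝ᵥ x)))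
      = fun x : Fin d → ℝ => ∏ i, Real.exp (-(1/2) * (x i)^2) := by
  funext x; rw [← Real.exp_sum]; congr 1; simp [dotProduct, Finset.mul_sum, sq]

private lemma ISD.integrable_iso (d : ℕ) :
    Integrable (fun x : Fin d → ℝ => Real.exp (-(1/2) * (x ⬝ᵥ x))) := by
  rw [ISD.iso_prod]
  exact Integrable.fintype_prod (f := fun (_ : Fin d) (v : ℝ) => Real.exp (-(1/2) * v^2))
    (fun i => integrable_exp_neg_mul_sq (by norm_num))

private lemma ISD.integral_iso (d : ℕ) :
    ∫ x : Fin d → ℝ, Real.exp (-(1/2) * (x ⬝ᵥ x)) = Real.sqrt ((2*π)^d) := by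
  rw [ISD.iso_prod, integral_fintype_prod_volume_eq_prod
    (f := fun (_ : Fin d) (v : ℝ) => Real.exp (-(1/2) * v^2))]
  have : ∫ v : ℝ, Real.exp (-(1/2) * v^2) = Real.sqrt (2*π) := by
    rw [integral_gaussian, show π / (1/2) = 2*π by ring]
  rw [this, Finset.prod_const, Finset.card_univ, Fintype.card_fin,
    ISD.sqrt_pow_comm _ (by positivity)]

private lemma ISD.continuous_iso (d : ℕ) :
    Continuous (fun x : Fin d → ℝ => Real.exp (-(1/2) * (x ⬝ᵥ x))) := by
  apply Real.continuous_exp.comp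
  exact continuous_const.mul (continuous_finset_sum _
    (fun i _ => (continuous_apply i).mul (continuous_apply i)))

private lemma ISD.dot_mulVec_symm {d : ℕ} {M : Matrix (Fin d) (Fin d) ℝ} (hMs : Mᵀ = M)
    (u x : Fin d → ℝ) : u ⬝ᵥ M *ᵥ x = x ⬝ᵥ M *ᵥ u := by
  rw [dotProduct_mulVec, ← hMs, vecMul_transpose, hMs, dotProduct_comm]

private lemma ISD.posdef_symm {d : ℕ} {M : Matrix (Fin d) (Fin d) ℝ} (hM : M.PosDef) :
    Mᵀ = M := by
  rw [← conjTranspose_eq_transpose_of_trivial]; exact hM.isHermitian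

private lemma ISD.quad_eq_iso {d : ℕ} {M L : Matrix (Fin d) (Fin d) ℝ} (hLL : L * L = M)
    (hLsymm : Lᵀ = L) (x : Fin d → ℝ) :
    x ⬝ᵥ M *ᵥ x = (L *ᵥ x) ⬝ᵥ (L *ᵥ x) := by
  rw [← hLL, ← mulVec_mulVec, dotProduct_mulVec, ← hLsymm, vecMul_transpose, hLsymm]

open scoped MatrixOrder in
/-- Gaussian integral for an arbitrary positive-definite quadratic form. -/
private lemma ISD.key_cov {d : ℕ} {M : Matrix (Fin d) (Fin d) ℝ} (hM : M.PosDef) :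
    Integrable (fun x : Fin d → ℝ => Real.exp (-(1/2) * (x ⬝ᵥ M *ᵥ x))) ∧
    ∫ x : Fin d → ℝ, Real.exp (-(1/2) * (x ⬝ᵥ M *ᵥ x)) = Real.sqrt ((2*π)^d / M.det) := by
  set L := CFC.sqrt M with hLdef
  have hLL : L * L = M := CFC.sqrt_mul_sqrt_self M hM.posSemidef.nonneg
  have hLsymm : Lᵀ = L := by
    rw [← conjTranspose_eq_transpose_of_trivial]
    exact (CFC.sqrt_nonneg M).isSelfAdjoint
  have hdetM : 0 < M.det := hM.det_pos
  have hdetL2 : L.det * L.det = M.det := by rw [← det_mul, hLL]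
  have hLdet : L.det ≠ 0 := by
    intro h; rw [h, zero_mul] at hdetL2; exact hdetM.ne hdetL2
  have habs : |L.det| = Real.sqrt M.det := by
    rw [← hdetL2, ← sq, Real.sqrt_sq_eq_abs]
  have hmap : Measure.map (Matrix.toLin' L) volume
      = ENNReal.ofReal |L.det|⁻¹ • volume := by
    rw [← abs_inv]; exact Real.map_matrix_volume_pi_eq_smul_volume_pi hLdet
  have hTcont : Continuous (Matrix.toLin' L) := LinearMap.continuous_on_pi _
  have hfun : (fun x : Fin d → ℝ => Real.exp (-(1/2) * (x ⬝ᵥ M *ᵥ x)))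
      = (fun y : Fin d → ℝ => Real.exp (-(1/2) * (y ⬝ᵥ y))) ∘ (Matrix.toLin' L) := by
    funext x
    simp only [Function.comp_apply, Matrix.toLin'_apply]
    rw [ISD.quad_eq_iso hLL hLsymm]
  have hFsm : AEStronglyMeasurable (fun y : Fin d → ℝ => Real.exp (-(1/2) * (y ⬝ᵥ y)))
      (Measure.map (Matrix.toLin' L) volume) := (ISD.continuous_iso d).aestronglyMeasurable
  have hFint : Integrable (fun y : Fin d → ℝ => Real.exp (-(1/2) * (y ⬝ᵥ y)))
      (Measure.map (Matrix.toLin' L) volume) := by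
    rw [hmap]
    exact (ISD.integrable_iso d).smul_measure ENNReal.ofReal_ne_top
  constructor
  · rw [hfun]
    exact (integrable_map_measure hFsm hTcont.measurable.aemeasurable).mp hFint
  · rw [hfun, Function.comp_def, ← integral_map hTcont.measurable.aemeasurable hFsm, hmap,
      integral_smul_measure, ISD.integral_iso, ENNReal.toReal_ofReal (by positivity), habs,
      smul_eq_mul, ← Real.sqrt_inv, ← Real.sqrt_mul (by positivity : (0:ℝ) ≤ M.det⁻¹)]
    rw [show M.det⁻¹ * (2*π)^d = (2*π)^d / M.det by ring]

private lemma ISD.shift_exponent {d : ℕ} {M : Matrix (Fin d) (Fin d) ℝ} (hM : M.PosDef)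
    (v x : Fin d → ℝ) :
    -(1/2) * ((x + M⁻¹ *ᵥ v) ⬝ᵥ M *ᵥ (x + M⁻¹ *ᵥ v)) + v ⬝ᵥ (x + M⁻¹ *ᵥ v)
      = (1/2) * (v ⬝ᵥ M⁻¹ *ᵥ v) + -(1/2) * (x ⬝ᵥ M *ᵥ x) := by
  have hMs : Mᵀ = M := ISD.posdef_symm hM
  have hMu : M *ᵥ (M⁻¹ *ᵥ v) = v := by
    rw [mulVec_mulVec, Matrix.mul_nonsing_inv _ hM.det_pos.ne'.isUnit, one_mulVec]
  have h1 : M *ᵥ (x + M⁻¹ *ᵥ v) = M *ᵥ x + v := by rw [mulVec_add, hMu]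
  have h2 : (M⁻¹ *ᵥ v) ⬝ᵥ M *ᵥ x = v ⬝ᵥ x := by
    rw [ISD.dot_mulVec_symm hMs, hMu, dotProduct_comm]
  have h3 : (M⁻¹ *ᵥ v) ⬝ᵥ v = v ⬝ᵥ M⁻¹ *ᵥ v := dotProduct_comm _ _
  rw [h1, dotProduct_add, add_dotProduct, add_dotProduct, dotProduct_add, h2, h3,
    show x ⬝ᵥ v = v ⬝ᵥ x from dotProduct_comm _ _]
  ring

/-- Gaussian integral with a linear term. -/
private lemma ISD.key_lin {d : ℕ} {M : Matrix (Fin d) (Fin d) ℝ} (hM : M.PosDef)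
    (v : Fin d → ℝ) :
    Integrable (fun x : Fin d → ℝ => Real.exp (-(1/2) * (x ⬝ᵥ M *ᵥ x) + v ⬝ᵥ x)) ∧
    ∫ x : Fin d → ℝ, Real.exp (-(1/2) * (x ⬝ᵥ M *ᵥ x) + v ⬝ᵥ x)
      = Real.sqrt ((2*π)^d / M.det) * Real.exp ((1/2) * (v ⬝ᵥ M⁻¹ *ᵥ v)) := by
  have hshift' : (fun x : Fin d → ℝ =>
        Real.exp (-(1/2) * ((x + M⁻¹ *ᵥ v) ⬝ᵥ M *ᵥ (x + M⁻¹ *ᵥ v)) + v ⬝ᵥ (x + M⁻¹ *ᵥ v)))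
      = fun x : Fin d → ℝ =>
        Real.exp ((1/2) * (v ⬝ᵥ M⁻¹ *ᵥ v)) * Real.exp (-(1/2) * (x ⬝ᵥ M *ᵥ x)) := by
    funext x
    rw [ISD.shift_exponent hM, Real.exp_add]
  have h2 : Integrable (fun x : Fin d → ℝ =>
      Real.exp (-(1/2) * ((x + M⁻¹ *ᵥ v) ⬝ᵥ M *ᵥ (x + M⁻¹ *ᵥ v)) + v ⬝ᵥ (x + M⁻¹ *ᵥ v))) := by
    rw [hshift']; exact (ISD.key_cov hM).1.const_mul _
  constructor
  · have h3 := h2.comp_add_right (-(M⁻¹ *ᵥ v))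
    simpa using h3
  · rw [show (∫ x : Fin d → ℝ, Real.exp (-(1/2) * (x ⬝ᵥ M *ᵥ x) + v ⬝ᵥ x))
        = ∫ x : Fin d → ℝ,
            Real.exp (-(1/2) * ((x + M⁻¹ *ᵥ v) ⬝ᵥ M *ᵥ (x + M⁻¹ *ᵥ v)) + v ⬝ᵥ (x + M⁻¹ *ᵥ v))
      from (integral_add_right_eq_self _ (M⁻¹ *ᵥ v)).symm,
      hshift', MeasureTheory.integral_const_mul, (ISD.key_cov hM).2]
    ring

section ISDProd
variable {d : ℕ} {A B : Matrix (Fin d) (Fin d) ℝ}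

private lemma ISD.woodbury (hA : A.PosDef) (hB : B.PosDef) :
    (A + B)⁻¹ = B⁻¹ - B⁻¹ * (A⁻¹ + B⁻¹)⁻¹ * B⁻¹ := by
  have hM : (A⁻¹ + B⁻¹).PosDef := hA.inv.add hB.inv
  apply Matrix.inv_eq_right_inv
  have h1 : (A + B) * B⁻¹ = A * (A⁻¹ + B⁻¹) := by
    rw [add_mul, Matrix.mul_nonsing_inv _ hB.det_pos.ne'.isUnit, mul_add,
      Matrix.mul_nonsing_inv _ hA.det_pos.ne'.isUnit, add_comm]
  calc (A + B) * (B⁻¹ - B⁻¹ * (A⁻¹ + B⁻¹)⁻¹ * B⁻¹)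
      = (A + B) * B⁻¹ - ((A + B) * B⁻¹) * ((A⁻¹ + B⁻¹)⁻¹ * B⁻¹) := by
        rw [mul_sub]; simp only [Matrix.mul_assoc]
    _ = A * (A⁻¹ + B⁻¹) - (A * (A⁻¹ + B⁻¹)) * ((A⁻¹ + B⁻¹)⁻¹ * B⁻¹) := by rw [h1]
    _ = A * (A⁻¹ + B⁻¹) - A * B⁻¹ := by
        rw [Matrix.mul_assoc A, ← Matrix.mul_assoc (A⁻¹ + B⁻¹),
          Matrix.mul_nonsing_inv _ hM.det_pos.ne'.isUnit, Matrix.one_mul]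
    _ = 1 := by
        rw [mul_add, Matrix.mul_nonsing_inv _ hA.det_pos.ne'.isUnit, add_sub_cancel_right]

private lemma ISD.det_M_eq (hA : A.PosDef) (hB : B.PosDef) :
    (A⁻¹ + B⁻¹).det = (A + B).det * A.det⁻¹ * B.det⁻¹ := by
  have e2 : A⁻¹ + B⁻¹ = A⁻¹ * (A + B) * B⁻¹ := by
    rw [mul_add, Matrix.nonsing_inv_mul _ hA.det_pos.ne'.isUnit, add_mul, Matrix.one_mul,
      Matrix.mul_assoc, Matrix.mul_nonsing_inv _ hB.det_pos.ne'.isUnit, Matrix.mul_one, add_comm]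
  rw [e2, det_mul, det_mul, det_nonsing_inv, det_nonsing_inv]
  simp only [Ring.inverse_eq_inv']
  ring

private lemma ISD.prod_exponent (hA : A.PosDef) (hB : B.PosDef) (u w : Fin d → ℝ) :
    -(1/2) * (u ⬝ᵥ A⁻¹ *ᵥ u) + -(1/2) * ((u + w) ⬝ᵥ B⁻¹ *ᵥ (u + w))
      = -(1/2) * (w ⬝ᵥ B⁻¹ *ᵥ w)
        + (-(1/2) * (u ⬝ᵥ (A⁻¹ + B⁻¹) *ᵥ u) + (-(B⁻¹ *ᵥ w)) ⬝ᵥ u) := by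
  have hBs : (B⁻¹)ᵀ = B⁻¹ := ISD.posdef_symm hB.inv
  have h1 : w ⬝ᵥ B⁻¹ *ᵥ u = u ⬝ᵥ B⁻¹ *ᵥ w := ISD.dot_mulVec_symm hBs w u
  have h2 : (B⁻¹ *ᵥ w) ⬝ᵥ u = u ⬝ᵥ B⁻¹ *ᵥ w := dotProduct_comm _ _
  simp only [mulVec_add, add_mulVec, dotProduct_add, add_dotProduct, neg_dotProduct, h1, h2]
  ring

private lemma ISD.exp_const_identity (hA : A.PosDef) (hB : B.PosDef) (w : Fin d → ℝ) :
    -(1/2) * (w ⬝ᵥ B⁻¹ *ᵥ w)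
      + (1/2) * ((-(B⁻¹ *ᵥ w)) ⬝ᵥ (A⁻¹ + B⁻¹)⁻¹ *ᵥ (-(B⁻¹ *ᵥ w)))
      = -(1/2) * (w ⬝ᵥ (A + B)⁻¹ *ᵥ w) := by
  have hBs : (B⁻¹)ᵀ = B⁻¹ := ISD.posdef_symm hB.inv
  have h0 : (-(B⁻¹ *ᵥ w)) ⬝ᵥ (A⁻¹ + B⁻¹)⁻¹ *ᵥ (-(B⁻¹ *ᵥ w))
      = (B⁻¹ *ᵥ w) ⬝ᵥ (A⁻¹ + B⁻¹)⁻¹ *ᵥ (B⁻¹ *ᵥ w) := by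
    rw [mulVec_neg, neg_dotProduct, dotProduct_neg, neg_neg]
  have h1 : (B⁻¹ *ᵥ w) ⬝ᵥ (A⁻¹ + B⁻¹)⁻¹ *ᵥ (B⁻¹ *ᵥ w)
      = w ⬝ᵥ (B⁻¹ * (A⁻¹ + B⁻¹)⁻¹ * B⁻¹) *ᵥ w := by
    rw [dotProduct_comm, ISD.dot_mulVec_symm hBs, mulVec_mulVec, mulVec_mulVec]
  rw [h0, h1, ISD.woodbury hA hB, sub_mulVec, dotProduct_sub]
  ring

private lemma ISD.gauss_prod_pointwise (hA : A.PosDef) (hB : B.PosDef) (a b x : Fin d → ℝ) :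
    gaussPDF d a A x * gaussPDF d b B x
      = ((Real.sqrt ((2*π)^d * A.det))⁻¹ * (Real.sqrt ((2*π)^d * B.det))⁻¹
          * Real.exp (-(1/2) * ((a - b) ⬝ᵥ B⁻¹ *ᵥ (a - b))))
        * Real.exp (-(1/2) * ((x - a) ⬝ᵥ (A⁻¹ + B⁻¹) *ᵥ (x - a))
            + (-(B⁻¹ *ᵥ (a - b))) ⬝ᵥ (x - a)) := by
  unfold gaussPDF
  rw [mul_mul_mul_comm, ← Real.exp_add, mul_assoc _ (Real.exp _), ← Real.exp_add]
  congr 1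
  have hxb : x - b = (x - a) + (a - b) := (sub_add_sub_cancel x a b).symm
  rw [hxb]
  exact congrArg Real.exp (ISD.prod_exponent hA hB (x - a) (a - b))

private lemma ISD.const_identity (hA : A.PosDef) (hB : B.PosDef) :
    (Real.sqrt ((2*π)^d * A.det))⁻¹ * (Real.sqrt ((2*π)^d * B.det))⁻¹
      * Real.sqrt ((2*π)^d / (A⁻¹ + B⁻¹).det)
      = (Real.sqrt ((2*π)^d * (A + B).det))⁻¹ := by
  have hc : (0:ℝ) < (2*π)^d := by positivity
  have hdA := hA.det_pos
  have hdB := hB.det_pos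
  have hdAB := (hA.add hB).det_pos
  rw [ISD.det_M_eq hA hB,
    show (2*π)^d / ((A + B).det * A.det⁻¹ * B.det⁻¹)
      = ((2*π)^d * A.det * B.det) / (A + B).det by field_simp,
    Real.sqrt_div (by positivity),
    Real.sqrt_mul (by positivity : (0:ℝ) ≤ (2*π)^d * A.det),
    Real.sqrt_mul hc.le A.det, Real.sqrt_mul hc.le B.det, Real.sqrt_mul hc.le (A+B).det]
  have h1 : Real.sqrt ((2*π)^d) ≠ 0 := by positivity
  have h2 : Real.sqrt A.det ≠ 0 := by positivity
  have h3 : Real.sqrt B.det ≠ 0 := by positivity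
  have h4 : Real.sqrt (A + B).det ≠ 0 := by positivity
  field_simp

/-- Product of two Gaussian densities: integrability and integral value. -/
private lemma ISD.gauss_product (hA : A.PosDef) (hB : B.PosDef) (a b : Fin d → ℝ) :
    Integrable (fun x : Fin d → ℝ => gaussPDF d a A x * gaussPDF d b B x) ∧
    ∫ x : Fin d → ℝ, gaussPDF d a A x * gaussPDF d b B x = gaussPDF d b (A + B) a := by
  have hM : (A⁻¹ + B⁻¹).PosDef := hA.inv.add hB.inv
  have hpt : (fun x : Fin d → ℝ => gaussPDF d a A x * gaussPDF d b B x)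
      = fun x : Fin d → ℝ =>
        ((Real.sqrt ((2*π)^d * A.det))⁻¹ * (Real.sqrt ((2*π)^d * B.det))⁻¹
          * Real.exp (-(1/2) * ((a - b) ⬝ᵥ B⁻¹ *ᵥ (a - b))))
        * Real.exp (-(1/2) * ((x - a) ⬝ᵥ (A⁻¹ + B⁻¹) *ᵥ (x - a))
            + (-(B⁻¹ *ᵥ (a - b))) ⬝ᵥ (x - a)) :=
    funext (ISD.gauss_prod_pointwise hA hB a b)
  constructor
  · rw [hpt]
    exact (((ISD.key_lin hM (-(B⁻¹ *ᵥ (a - b)))).1).comp_sub_right a).const_mul _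
  · rw [hpt, MeasureTheory.integral_const_mul,
      integral_sub_right_eq_self (fun u : Fin d → ℝ =>
        Real.exp (-(1/2) * (u ⬝ᵥ (A⁻¹ + B⁻¹) *ᵥ u) + (-(B⁻¹ *ᵥ (a - b))) ⬝ᵥ u)) a,
      (ISD.key_lin hM (-(B⁻¹ *ᵥ (a - b)))).2]
    unfold gaussPDF
    rw [← ISD.const_identity hA hB, ← ISD.exp_const_identity hA hB (a - b), Real.exp_add]
    ring

end ISDProd


/-- (Lemma 1) The weight
`αₙ* = (2π)^{d/2} (det(2Pₙ))^{1/2} [ Σₘ βₘ N(μₙ; mₘ, Pₙ+Sₘ) − Σ_{n'≠n} α_{n'} N(μₙ; μ_{n'}, Pₙ+P_{n'}) ]`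
is the unique global minimizer over `αₙ ∈ ℝ` of `αₙ ↦ ISD(p‖q)`. -/
theorem isd_single_weight_unique_minimizer (d : ℕ) (I₁ I₂ : Type*)
    [Fintype I₁] [Fintype I₂] [DecidableEq I₁]
    (α : I₁ → ℝ) (β : I₂ → ℝ)
    (μ : I₁ → Fin d → ℝ) (m : I₂ → Fin d → ℝ)
    (P : I₁ → Matrix (Fin d) (Fin d) ℝ) (S : I₂ → Matrix (Fin d) (Fin d) ℝ)
    (hP : ∀ n, (P n).PosDef) (hS : ∀ m', (S m').PosDef) (n : I₁)
    (αstar : ℝ)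
    (hαstar : αstar = Real.sqrt ((2 * Real.pi) ^ d * ((2 : ℝ) • P n).det) *
        ((∑ m', β m' * gaussPDF d (m m') (P n + S m') (μ n))
          - ∑ n' ∈ Finset.univ.erase n, α n' * gaussPDF d (μ n') (P n + P n') (μ n))) :
    (∀ a : ℝ, isdWeightFun d I₁ I₂ α β μ m P S n αstar
        ≤ isdWeightFun d I₁ I₂ α β μ m P S n a)
      ∧ ∀ a : ℝ, a ≠ αstar →
          isdWeightFun d I₁ I₂ α β μ m P S n αstar
            < isdWeightFun d I₁ I₂ α β μ m P S n a := by
  classical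
  set g : (Fin d → ℝ) → ℝ := gaussPDF d (μ n) (P n) with hg
  set h : (Fin d → ℝ) → ℝ := fun x =>
      (∑ n' ∈ Finset.univ.erase n, α n' * gaussPDF d (μ n') (P n') x)
        - ∑ m', β m' * gaussPDF d (m m') (S m') x with hh
  -- rewrite the objective
  have hJ : ∀ t, isdWeightFun d I₁ I₂ α β μ m P S n t
      = ∫ x : Fin d → ℝ, (t * g x + h x)^2 := by
    intro t
    unfold isdWeightFun
    congr 1
    funext x
    have hsum : (∑ n', Function.update α n t n' * gaussPDF d (μ n') (P n') x)
        = t * g x + ∑ n' ∈ Finset.univ.erase n, α n' * gaussPDF d (μ n') (P n') x := by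
      rw [← Finset.add_sum_erase _ _ (Finset.mem_univ n), Function.update_self]
      congr 1
      refine Finset.sum_congr rfl (fun j hj => ?_)
      rw [Function.update_of_ne (Finset.mem_erase.mp hj).1]
    rw [hsum, hh]
    ring
  -- integrability of g * g
  have hgg := ISD.gauss_product (hP n) (hP n) (μ n) (μ n)
  -- integrability and value of g * h
  have hghfun : (fun x => g x * h x)
      = fun x => (∑ n' ∈ Finset.univ.erase n,
            α n' * (gaussPDF d (μ n) (P n) x * gaussPDF d (μ n') (P n') x))
          - ∑ m', β m' * (gaussPDF d (μ n) (P n) x * gaussPDF d (m m') (S m') x) := by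
    funext x
    rw [hh, hg]
    rw [mul_sub, Finset.mul_sum, Finset.mul_sum]
    congr 1 <;> exact Finset.sum_congr rfl (fun j _ => by ring)
  have hIgh : Integrable (fun x => g x * h x) := by
    rw [hghfun]
    exact ((integrable_finset_sum _ (fun j _ =>
        (ISD.gauss_product (hP n) (hP j) (μ n) (μ j)).1.const_mul (α j))).sub
      (integrable_finset_sum _ (fun j _ =>
        (ISD.gauss_product (hP n) (hS j) (μ n) (m j)).1.const_mul (β j))))
  have hBval : ∫ x, g x * h x
      = (∑ n' ∈ Finset.univ.erase n, α n' * gaussPDF d (μ n') (P n + P n') (μ n))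
        - ∑ m', β m' * gaussPDF d (m m') (P n + S m') (μ n) := by
    rw [hghfun, integral_sub
      (integrable_finset_sum _ (fun j _ =>
        (ISD.gauss_product (hP n) (hP j) (μ n) (μ j)).1.const_mul (α j)))
      (integrable_finset_sum _ (fun j _ =>
        (ISD.gauss_product (hP n) (hS j) (μ n) (m j)).1.const_mul (β j))),
      integral_finset_sum _ (fun j _ =>
        (ISD.gauss_product (hP n) (hP j) (μ n) (μ j)).1.const_mul (α j)),
      integral_finset_sum _ (fun j _ =>
        (ISD.gauss_product (hP n) (hS j) (μ n) (m j)).1.const_mul (β j))]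
    congr 1 <;> refine Finset.sum_congr rfl (fun j _ => ?_) <;>
      rw [MeasureTheory.integral_const_mul]
    · rw [(ISD.gauss_product (hP n) (hP j) (μ n) (μ j)).2]
    · rw [(ISD.gauss_product (hP n) (hS j) (μ n) (m j)).2]
  -- integrability of h * h via sum indexing
  set c : I₁ ⊕ I₂ → ℝ := Sum.elim (fun j => if j = n then 0 else α j) (fun j => -β j) with hc
  set mean : I₁ ⊕ I₂ → (Fin d → ℝ) := Sum.elim μ m with hmean
  set cov : I₁ ⊕ I₂ → Matrix (Fin d) (Fin d) ℝ := Sum.elim P S with hcov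
  have hpos : ∀ k, (cov k).PosDef := by rintro (j | j) <;> simp [hcov, hP, hS]
  have hsumh : h = fun x => ∑ k, c k * gaussPDF d (mean k) (cov k) x := by
    funext x
    simp only [hh]
    rw [Fintype.sum_sum_type]
    have hz : c (Sum.inl n) * gaussPDF d (mean (Sum.inl n)) (cov (Sum.inl n)) x = 0 := by
      simp [hc]
    have e1 : (∑ j : I₁, c (Sum.inl j) * gaussPDF d (mean (Sum.inl j)) (cov (Sum.inl j)) x)
        = ∑ n' ∈ Finset.univ.erase n, α n' * gaussPDF d (μ n') (P n') x := by
      rw [← Finset.sum_erase (f := fun j : I₁ => c (Sum.inl j) * gaussPDF d (mean (Sum.inl j)) (cov (Sum.inl j)) x) (a := n) Finset.univ hz]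
      refine Finset.sum_congr rfl (fun j hj => ?_)
      simp [hc, hmean, hcov, (Finset.mem_erase.mp hj).1]
    have e2 : (∑ j : I₂, c (Sum.inr j) * gaussPDF d (mean (Sum.inr j)) (cov (Sum.inr j)) x)
        = -∑ m', β m' * gaussPDF d (m m') (S m') x := by
      rw [← Finset.sum_neg_distrib]
      exact Finset.sum_congr rfl (fun j _ => by simp [hc, hmean, hcov])
    rw [e1, e2, sub_eq_add_neg]

  have hIhh : Integrable (fun x => h x * h x) := by
    have : (fun x => h x * h x) = fun x => ∑ k : I₁ ⊕ I₂, ∑ l : I₁ ⊕ I₂,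
        (c k * c l) * (gaussPDF d (mean k) (cov k) x * gaussPDF d (mean l) (cov l) x) := by
      funext x
      simp only [hsumh]
      rw [Finset.sum_mul_sum]
      exact Finset.sum_congr rfl (fun k _ => Finset.sum_congr rfl (fun l _ => by ring))
    rw [this]
    exact integrable_finset_sum _ (fun k _ => integrable_finset_sum _ (fun l _ =>
      (ISD.gauss_product (hpos k) (hpos l) (mean k) (mean l)).1.const_mul _))
  -- the quadratic expansion
  set Agg : ℝ := gaussPDF d (μ n) (P n + P n) (μ n) with hAgg
  set Bval : ℝ := (∑ n' ∈ Finset.univ.erase n, α n' * gaussPDF d (μ n') (P n + P n') (μ n))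
      - ∑ m', β m' * gaussPDF d (m m') (P n + S m') (μ n) with hBv
  set Cval : ℝ := ∫ x, h x * h x with hCv
  have hquad : ∀ t, isdWeightFun d I₁ I₂ α β μ m P S n t
      = Agg * t^2 + 2 * Bval * t + Cval := by
    intro t
    rw [hJ t]
    have hpt : (fun x : Fin d → ℝ => (t * g x + h x)^2)
        = fun x => (t^2 * (g x * g x) + (2 * t) * (g x * h x)) + h x * h x := by
      funext x; ring
    have Int2 : Integrable (fun x => t^2 * (g x * g x)) := hgg.1.const_mul _
    have Int3 : Integrable (fun x => (2*t) * (g x * h x)) := hIgh.const_mul _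
    have Int1 : Integrable (fun x => t^2 * (g x * g x) + (2*t) * (g x * h x)) := Int2.add Int3
    have hIggval : ∫ x, g x * g x = Agg := hgg.2
    rw [hpt, integral_add Int1 hIhh, integral_add Int2 Int3,
      MeasureTheory.integral_const_mul, MeasureTheory.integral_const_mul,
      hIggval, hBval, ← hCv]
    ring
  -- positivity of Agg and evaluation
  have hAggval : Agg = (Real.sqrt ((2 * Real.pi) ^ d * ((2:ℝ) • P n).det))⁻¹ := by
    rw [hAgg, ← two_smul ℝ (P n)]
    unfold gaussPDF
    simp
  have hAggpos : 0 < Agg := by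
    rw [hAggval]
    have : 0 < ((2:ℝ) • P n).det := by
      rw [two_smul ℝ (P n)]; exact ((hP n).add (hP n)).det_pos
    positivity
  -- the key relation : Agg * αstar = -Bval
  have hrel : Agg * αstar = -Bval := by
    rw [hαstar, hAggval, ← mul_assoc, inv_mul_cancel₀ (by
      have : 0 < ((2:ℝ) • P n).det := by
        rw [two_smul ℝ (P n)]; exact ((hP n).add (hP n)).det_pos
      positivity), one_mul, hBv]
    ring
  have hBrel : Bval = -(Agg * αstar) := by linarith
  have hdiff : ∀ a : ℝ, Agg * a^2 + 2 * Bval * a + Cval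
      - (Agg * αstar^2 + 2 * Bval * αstar + Cval) = Agg * (a - αstar)^2 := by
    intro a; rw [hBrel]; ring
  constructor
  · intro a
    rw [hquad a, hquad αstar]
    have := mul_nonneg hAggpos.le (sq_nonneg (a - αstar))
    linarith [hdiff a]
  · intro a ha
    rw [hquad a, hquad αstar]
    have h2 : a - αstar ≠ 0 := sub_ne_zero.mpr ha
    have h1 : 0 < (a - αstar)^2 :=
      lt_of_le_of_ne (sq_nonneg _) (Ne.symm (pow_ne_zero 2 h2))
    have := mul_pos hAggpos h1
    linarith [hdiff a]
end

section
/- (AA fusion is the best fit of the mixture in the KL sense) Let D₁, …, D_I be nonnegative integrable functions on ℝ^d, let w₁, …, w_I > 0 with Σᵢ wᵢ = 1, and set D_AA = Σᵢ wᵢ Dᵢ. Let g be a nonnegative measurable function with g > 0 a.e. on {D_AA > 0} and with ∫_{ℝ^d} g(x) dx = ∫_{ℝ^d} D_AA(x) dx < ∞. Assuming the relevant integrals exist, Σᵢ wᵢ D_KL(Dᵢ‖g) ≥ Σᵢ wᵢ D_KL(Dᵢ‖D_AA); that is, among all nonnegative functions of the same total mass as D_AA, the arithmetic average D_AA minimizes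 the weighted sum of extended KL divergences from the local densities. -/
open MeasureTheory Finset

/-- (AA fusion is the best fit of the mixture in the KL sense) For nonnegative
integrable `D₁, …, D_I`, positive weights summing to one, `D_AA = Σᵢ wᵢ Dᵢ`, and
nonnegative measurable `g` positive a.e. on `{D_AA > 0}` with the same total mass
as `D_AA`, assuming the relevant integrals exist:
`Σᵢ wᵢ D_KL(Dᵢ‖g) ≥ Σᵢ wᵢ D_KL(Dᵢ‖D_AA)`. -/
theorem aa_fusion_best_fit_kl (d : ℕ) (I : Type*) [Fintype I]
    (D : I → (Fin d → ℝ) → ℝ) (hDmeas : ∀ i, Measurable (D i))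
    (hDnn : ∀ i x, 0 ≤ D i x) (hDint : ∀ i, Integrable (D i))
    (w : I → ℝ) (hw : ∀ i, 0 < w i) (hw1 : ∑ i, w i = 1)
    (g : (Fin d → ℝ) → ℝ) (hgmeas : Measurable g) (hgnn : ∀ x, 0 ≤ g x)
    (hgint : Integrable g)
    (hgpos : ∀ᵐ x : Fin d → ℝ ∂volume, 0 < (∑ j, w j * D j x) → 0 < g x)
    (hmass : ∫ x : Fin d → ℝ, g x = ∫ x : Fin d → ℝ, ∑ j, w j * D j x)
    (hint1 : ∀ i, Integrable (fun x : Fin d → ℝ => D i x * Real.log (D i x / g x)))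
    (hint2 : ∀ i, Integrable
      (fun x : Fin d → ℝ => D i x * Real.log (D i x / ∑ j, w j * D j x))) :
    ∑ i, w i * ∫ x : Fin d → ℝ, D i x * Real.log (D i x / g x)
      ≥ ∑ i, w i * ∫ x : Fin d → ℝ, D i x * Real.log (D i x / ∑ j, w j * D j x) := by
  set S : (Fin d → ℝ) → ℝ := fun x => ∑ j, w j * D j x with hS
  have hSnn : ∀ x, 0 ≤ S x := fun x =>
    Finset.sum_nonneg fun j _ => mul_nonneg (hw j).le (hDnn j x)
  have hSint : Integrable S := by
    apply integrable_finset_sum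
    intro i _
    exact (hDint i).const_mul _
  -- the combined function
  set F : (Fin d → ℝ) → ℝ := fun x =>
    ∑ i, w i * (D i x * Real.log (D i x / g x) - D i x * Real.log (D i x / S x)) with hF
  have hFsummand : ∀ i : I, Integrable (fun x =>
      w i * (D i x * Real.log (D i x / g x) - D i x * Real.log (D i x / S x))) :=
    fun i => ((hint1 i).sub (hint2 i)).const_mul _
  have hFint : Integrable F := integrable_finset_sum _ fun i _ => hFsummand i
  have hIF : ∫ x, F x = (∑ i, w i * ∫ x, D i x * Real.log (D i x / g x))
      - ∑ i, w i * ∫ x, D i x * Real.log (D i x / S x) := by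
    rw [hF, integral_finset_sum _ fun i _ => hFsummand i]
    have key : ∀ i : I, ∫ x, w i * (D i x * Real.log (D i x / g x)
        - D i x * Real.log (D i x / S x))
        = (w i * ∫ x, D i x * Real.log (D i x / g x))
          - w i * ∫ x, D i x * Real.log (D i x / S x) := by
      intro i
      rw [integral_const_mul, integral_sub (hint1 i) (hint2 i), mul_sub]
    rw [Finset.sum_congr rfl fun i _ => key i, Finset.sum_sub_distrib]
  -- pointwise inequality a.e.
  have hptwise : ∀ᵐ x ∂volume, S x - g x ≤ F x := by
    filter_upwards [hgpos] with x hx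
    rcases eq_or_lt_of_le (hSnn x) with hS0 | hSpos
    · -- S x = 0, hence all D i x = 0
      have hD0 : ∀ i, D i x = 0 := by
        intro i
        by_contra h
        have hDi : 0 < D i x := lt_of_le_of_ne (hDnn i x) (Ne.symm h)
        have : 0 < S x := by
          apply Finset.sum_pos' (fun j _ => mul_nonneg (hw j).le (hDnn j x))
          exact ⟨i, Finset.mem_univ i, mul_pos (hw i) hDi⟩
        linarith
      have hF0 : F x = 0 := by
        simp only [hF]
        apply Finset.sum_eq_zero
        intro i _
        rw [hD0 i]; ring
      rw [hF0, ← hS0]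
      simpa using hgnn x
    · have hg : 0 < g x := hx hSpos
      have hFx : F x = S x * Real.log (S x / g x) := by
        simp only [hF, hS]
        rw [Finset.sum_mul]
        apply Finset.sum_congr rfl
        intro i _
        rcases eq_or_lt_of_le (hDnn i x) with hDi0 | hDi
        · rw [← hDi0]; ring
        · rw [Real.log_div hDi.ne' hg.ne', Real.log_div hDi.ne' hSpos.ne',
            Real.log_div hSpos.ne' hg.ne']
          ring
      rw [hFx]
      have hlog : Real.log (g x / S x) ≤ g x / S x - 1 :=
        Real.log_le_sub_one_of_pos (div_pos hg hSpos)
      rw [Real.log_div hg.ne' hSpos.ne'] at hlog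
      rw [Real.log_div hSpos.ne' hg.ne']
      have h2 : 1 - g x / S x ≤ Real.log (S x) - Real.log (g x) := by linarith
      have h3 := mul_le_mul_of_nonneg_left h2 hSpos.le
      calc S x - g x = S x * (1 - g x / S x) := by field_simp
        _ ≤ S x * (Real.log (S x) - Real.log (g x)) := h3
  have hmain : ∫ x, (S x - g x) ≤ ∫ x, F x :=
    integral_mono_ae (hSint.sub hgint) hFint hptwise
  have hzero : ∫ x, (S x - g x) = 0 := by
    rw [integral_sub hSint hgint, hmass]
    simp [hS]
  rw [hzero, hIF] at hmain
  simp only [hS] at hmain ⊢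
  linarith
end
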